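/- There exists a unique positive real number m̂ satisfying 2Φ(−m̂) = m̂·φ(m̂), and the function x ↦ x²·Φ(−x) on [0, ∞) attains its global maximum exactly at m̂: x²·Φ(−x) ≤ m̂²·Φ(−m̂) for all x ≥ 0, with equality if and only if x = m̂. -/

import Mathlib

open MeasureTheory Set Real Filter

noncomputable def Phi (x : ℝ) : ℝ :=
  ∫ t in Set.Iic x, (Real.sqrt (2 * Real.pi))⁻¹ * Real.exp (-t ^ 2 / 2)

noncomputable def phi (x : ℝ) : ℝ :=
  (Real.sqrt (2 * Real.pi))⁻¹ * Real.exp (-x ^ 2 / 2)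

lemma phi_pos (x : ℝ) : 0 < phi x := by
  have : 0 < Real.sqrt (2 * Real.pi) := Real.sqrt_pos.2 (by positivity)
  exact mul_pos (inv_pos.2 this) (Real.exp_pos _)

lemma phi_neg (x : ℝ) : phi (-x) = phi x := by simp [phi]

lemma continuous_phi : Continuous phi := by
  unfold phi; fun_prop

lemma integrable_phi : Integrable phi := by
  have h : Integrable (fun t : ℝ => Real.exp (-(1/2 : ℝ) * t ^ 2)) :=
    integrable_exp_neg_mul_sq (by norm_num)
  have := h.const_mul (Real.sqrt (2 * Real.pi))⁻¹
  refine this.congr (Filter.Eventually.of_forall fun t => ?_)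
  unfold phi; ring_nf

lemma Phi_eq (x : ℝ) : Phi x = ∫ t in Set.Iic x, phi t := rfl

lemma hasDerivAt_phi (x : ℝ) : HasDerivAt phi (-x * phi x) x := by
  have h1 : HasDerivAt (fun t : ℝ => -t ^ 2 / 2) (-x) x := by
    have := ((hasDerivAt_pow 2 x).neg).div_const 2
    simpa using this.congr_deriv (by ring)
  have h2 := (h1.exp).const_mul (Real.sqrt (2 * Real.pi))⁻¹
  refine h2.congr_deriv ?_
  unfold phi; ring

lemma hasDerivAt_Phi (x : ℝ) : HasDerivAt Phi (phi x) x := by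
  have key : ∀ y : ℝ, Phi y = Phi 0 + ∫ t in (0:ℝ)..y, phi t := by
    intro y
    rw [Phi_eq, Phi_eq, ← intervalIntegral.integral_Iic_sub_Iic
      integrable_phi.integrableOn integrable_phi.integrableOn]
    ring
  have h : HasDerivAt (fun y => Phi 0 + ∫ t in (0:ℝ)..y, phi t) (phi x) x := by
    have := intervalIntegral.integral_hasDerivAt_right (a := 0) (b := x)
      integrable_phi.intervalIntegrable
      continuous_phi.aestronglyMeasurable.stronglyMeasurableAtFilter
      continuous_phi.continuousAt
    exact this.const_add (Phi 0)
  exact h.congr_deriv rfl |>.congr_of_eventuallyEq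
    (Filter.Eventually.of_forall fun y => (key y))

lemma Phi_pos (y : ℝ) : 0 < Phi y := by
  have h1 : Phi y = Phi (y - 1) + ∫ t in (y-1)..y, phi t := by
    rw [Phi_eq, Phi_eq, ← intervalIntegral.integral_Iic_sub_Iic
      integrable_phi.integrableOn integrable_phi.integrableOn]
    ring
  have h2 : 0 ≤ Phi (y - 1) :=
    setIntegral_nonneg measurableSet_Iic fun t _ => (phi_pos t).le
  have h3 : 0 < ∫ t in (y-1)..y, phi t :=
    intervalIntegral.intervalIntegral_pos_of_pos
      (integrable_phi.intervalIntegrable) (fun t => phi_pos t) (by linarith)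
  linarith

lemma integral_phi : ∫ t, phi t = 1 := by
  have h : ∫ t : ℝ, Real.exp (-(1/2 : ℝ) * t ^ 2) = Real.sqrt (2 * Real.pi) := by
    rw [integral_gaussian]
    rw [div_div_eq_mul_div, div_one, mul_comm]
  have : ∫ t, phi t = (Real.sqrt (2 * Real.pi))⁻¹ * ∫ t : ℝ, Real.exp (-(1/2:ℝ) * t ^ 2) := by
    rw [← integral_const_mul]
    congr 1; ext t; unfold phi; ring_nf
  rw [this, h, inv_mul_cancel₀]
  positivity

lemma Phi_zero : Phi 0 = 1 / 2 := by
  have hsym : Phi 0 = ∫ t in Set.Ioi (0:ℝ), phi t := by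
    rw [Phi_eq]
    have := integral_comp_neg_Iic (0:ℝ) phi
    simp only [phi_neg, neg_zero] at this
    exact this
  have hsum : Phi 0 + ∫ t in Set.Ioi (0:ℝ), phi t = 1 := by
    rw [Phi_eq, intervalIntegral.integral_Iic_add_Ioi
      integrable_phi.integrableOn integrable_phi.integrableOn, integral_phi]
  linarith [hsym, hsum]

lemma tendsto_phi_atBot : Filter.Tendsto phi Filter.atBot (nhds 0) := by
  have hsq : Filter.Tendsto (fun t : ℝ => t ^ 2) Filter.atBot Filter.atTop := by
    have ha : Filter.Tendsto (fun t : ℝ => -t) Filter.atBot Filter.atTop :=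
      tendsto_neg_atBot_atTop
    have hb : Filter.Tendsto (fun s : ℝ => s ^ 2) Filter.atTop Filter.atTop :=
      tendsto_pow_atTop (by norm_num)
    have := hb.comp ha
    refine this.congr fun t => ?_
    simp [Function.comp]
  have h1 : Filter.Tendsto (fun t : ℝ => -t ^ 2 / 2) Filter.atBot Filter.atBot := by
    apply Filter.Tendsto.atBot_div_const (by norm_num)
    exact Filter.tendsto_neg_atBot_iff.mpr hsq
  have h2 : Filter.Tendsto (fun t : ℝ => Real.exp (-t ^ 2 / 2)) Filter.atBot (nhds 0) :=
    Real.tendsto_exp_atBot.comp h1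
  have h3 := h2.const_mul (Real.sqrt (2 * Real.pi))⁻¹
  rw [mul_zero] at h3
  exact h3

lemma integrable_neg_mul_phi : Integrable (fun t => -t * phi t) := by
  have h : Integrable (fun t : ℝ => t * Real.exp (-(1/2 : ℝ) * t ^ 2)) :=
    integrable_mul_exp_neg_mul_sq (by norm_num)
  have := (h.const_mul (-(Real.sqrt (2 * Real.pi))⁻¹))
  refine this.congr (Filter.Eventually.of_forall fun t => ?_)
  unfold phi; ring_nf

lemma integral_neg_mul_phi (a : ℝ) : ∫ t in Set.Iic a, -t * phi t = phi a := by
  have := MeasureTheory.integral_Iic_of_hasDerivAt_of_tendsto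
    (f := phi) (f' := fun t => -t * phi t) (a := a) (m := 0)
    continuous_phi.continuousWithinAt
    (fun t _ => hasDerivAt_phi t)
    integrable_neg_mul_phi.integrableOn
    tendsto_phi_atBot
  simpa using this

lemma mills {x : ℝ} (hx : 0 < x) : Phi (-x) ≤ phi x / x := by
  have key : Phi (-x) ≤ ∫ t in Set.Iic (-x), x⁻¹ * (-t * phi t) := by
    rw [Phi_eq]
    refine setIntegral_mono_on integrable_phi.integrableOn
      ((integrable_neg_mul_phi.const_mul x⁻¹).integrableOn) measurableSet_Iic ?_
    intro t ht
    simp only [Set.mem_Iic] at ht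
    have h1 : x ≤ -t := by linarith
    have h2 : (1:ℝ) ≤ x⁻¹ * (-t) := by
      rw [← div_eq_inv_mul, le_div_iff₀ hx]; linarith
    calc phi t = 1 * phi t := (one_mul _).symm
    _ ≤ (x⁻¹ * (-t)) * phi t := by
        apply mul_le_mul_of_nonneg_right h2 (phi_pos t).le
    _ = x⁻¹ * (-t * phi t) := by ring
  rw [MeasureTheory.integral_const_mul, integral_neg_mul_phi, phi_neg] at key
  rw [div_eq_inv_mul]
  exact key

noncomputable def gg (x : ℝ) : ℝ := 2 * Phi (-x) - x * phi x

lemma hasDerivAt_Phi_neg (x : ℝ) : HasDerivAt (fun y : ℝ => Phi (-y)) (-phi x) x := by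
  have := (hasDerivAt_Phi (-x)).comp x (hasDerivAt_neg x)
  simpa [phi_neg, Function.comp_def] using this

lemma hasDerivAt_gg (x : ℝ) : HasDerivAt gg ((x ^ 2 - 3) * phi x) x := by
  have h2 : HasDerivAt (fun y : ℝ => y * phi y) (1 * phi x + x * (-x * phi x)) x :=
    (hasDerivAt_id x).mul (hasDerivAt_phi x)
  have := ((hasDerivAt_Phi_neg x).const_mul 2).sub h2
  refine HasDerivAt.congr_deriv this ?_
  ring

lemma gg_anti : StrictAntiOn gg (Set.Icc 0 (Real.sqrt 3)) := by
  apply strictAntiOn_of_deriv_neg (convex_Icc _ _)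
    (fun x _ => (hasDerivAt_gg x).continuousAt.continuousWithinAt)
  intro x hx
  rw [interior_Icc] at hx
  rw [(hasDerivAt_gg x).deriv]
  have h3 : (Real.sqrt 3) ^ 2 = 3 := Real.sq_sqrt (by norm_num)
  have hx3 : x ^ 2 < 3 := by nlinarith [hx.1, hx.2, Real.sqrt_nonneg 3]
  nlinarith [phi_pos x]

lemma gg_zero : gg 0 = 1 := by simp [gg, Phi_zero]

lemma gg_neg_of_ge {x : ℝ} (hx : Real.sqrt 3 ≤ x) : gg x < 0 := by
  have hs : 0 < Real.sqrt 3 := Real.sqrt_pos.2 (by norm_num)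
  have h3 : 0 < x := lt_of_lt_of_le hs hx
  have hm := mills h3
  have hm' : x * Phi (-x) ≤ phi x := by
    rw [div_eq_inv_mul] at hm
    calc x * Phi (-x) ≤ x * (x⁻¹ * phi x) :=
          mul_le_mul_of_nonneg_left hm h3.le
    _ = phi x := by field_simp
  have hx2 : 3 ≤ x ^ 2 := by
    nlinarith [Real.sq_sqrt (by norm_num : (0:ℝ) ≤ 3), hs]
  have hp := phi_pos x
  have hP := Phi_pos (-x)
  show 2 * Phi (-x) - x * phi x < 0
  nlinarith [mul_pos h3 hp, mul_pos h3 hP]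

noncomputable def ff (x : ℝ) : ℝ := x ^ 2 * Phi (-x)

lemma hasDerivAt_ff (x : ℝ) : HasDerivAt ff (x * gg x) x := by
  have h1 : HasDerivAt (fun y : ℝ => y ^ 2) (2 * x ^ 1) x := by
    simpa using hasDerivAt_pow 2 x
  have := h1.mul (hasDerivAt_Phi_neg x)
  refine HasDerivAt.congr_deriv this ?_
  simp [gg]; ring

lemma exists_root : ∃ m ∈ Set.Ioo 0 (Real.sqrt 3), gg m = 0 := by
  have hs : (0:ℝ) ≤ Real.sqrt 3 := Real.sqrt_nonneg 3
  have hcont : ContinuousOn gg (Set.Icc 0 (Real.sqrt 3)) :=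
    fun x _ => (hasDerivAt_gg x).continuousAt.continuousWithinAt
  have hneg := gg_neg_of_ge (le_refl (Real.sqrt 3))
  have h0 : (0:ℝ) ∈ Set.Icc (gg (Real.sqrt 3)) (gg 0) := by
    constructor
    · exact hneg.le
    · rw [gg_zero]; norm_num
  obtain ⟨m, hm, hgm⟩ := intermediate_value_Icc' hs hcont h0
  refine ⟨m, ⟨?_, ?_⟩, hgm⟩
  · rcases hm.1.lt_or_eq with h | h
    · exact h
    · exfalso; rw [← h] at hgm; rw [gg_zero] at hgm; norm_num at hgm
  · rcases hm.2.lt_or_eq with h | h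
    · exact h
    · exfalso; rw [h] at hgm; linarith

/-- There exists a unique positive real number `m̂` with
`2Φ(−m̂) = m̂·φ(m̂)`, and the function `x ↦ x²·Φ(−x)` on `[0, ∞)` attains its global
maximum exactly at `m̂`: `x²·Φ(−x) ≤ m̂²·Φ(−m̂)` for all `x ≥ 0`, with equality iff `x = m̂`. -/
theorem exists_unique_maximizer_sq_Phi_neg :
    ∃ m : ℝ, 0 < m ∧ 2 * Phi (-m) = m * phi m ∧
      (∀ m' : ℝ, 0 < m' → 2 * Phi (-m') = m' * phi m' → m' = m) ∧
      (∀ x : ℝ, 0 ≤ x → x ^ 2 * Phi (-x) ≤ m ^ 2 * Phi (-m)) ∧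
      (∀ x : ℝ, 0 ≤ x → (x ^ 2 * Phi (-x) = m ^ 2 * Phi (-m) ↔ x = m)) := by
  obtain ⟨m, hm, hgm⟩ := exists_root
  have hm0 : 0 < m := hm.1
  have hm3 : m < Real.sqrt 3 := hm.2
  have hmIcc : m ∈ Set.Icc 0 (Real.sqrt 3) := ⟨hm0.le, hm3.le⟩
  -- uniqueness of roots of gg among positives
  have huniq : ∀ m' : ℝ, 0 < m' → gg m' = 0 → m' = m := by
    intro m' hm' hg'
    by_cases h : m' ≤ Real.sqrt 3
    · exact gg_anti.injOn ⟨hm'.le, h⟩ hmIcc (hg'.trans hgm.symm)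
    · exfalso
      have := gg_neg_of_ge (le_of_lt (not_le.mp h))
      linarith
  -- gg positive left of m, negative right of m
  have hgpos : ∀ x : ℝ, 0 ≤ x → x < m → 0 < gg x := by
    intro x hx0 hxm
    have := gg_anti ⟨hx0, by linarith⟩ hmIcc hxm
    linarith
  have hgneg : ∀ x : ℝ, m < x → gg x < 0 := by
    intro x hxm
    by_cases h : x ≤ Real.sqrt 3
    · have := gg_anti hmIcc ⟨by linarith, h⟩ hxm
      linarith
    · exact gg_neg_of_ge (le_of_lt (not_le.mp h))
  -- ff strictly monotone on [0, m]
  have hmono : StrictMonoOn ff (Set.Icc 0 m) := by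
    apply strictMonoOn_of_deriv_pos (convex_Icc _ _)
      (fun x _ => (hasDerivAt_ff x).continuousAt.continuousWithinAt)
    intro x hx
    rw [interior_Icc] at hx
    rw [(hasDerivAt_ff x).deriv]
    exact mul_pos hx.1 (hgpos x hx.1.le hx.2)
  -- ff strictly antitone on [m, ∞)
  have hanti : StrictAntiOn ff (Set.Ici m) := by
    apply strictAntiOn_of_deriv_neg (convex_Ici _)
      (fun x _ => (hasDerivAt_ff x).continuousAt.continuousWithinAt)
    intro x hx
    rw [interior_Ici] at hx
    rw [(hasDerivAt_ff x).deriv]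
    exact mul_neg_of_pos_of_neg (lt_trans hm0 hx) (hgneg x hx)
  have hlt : ∀ x : ℝ, 0 ≤ x → x ≠ m → ff x < ff m := by
    intro x hx0 hxm
    rcases lt_or_gt_of_ne hxm with h | h
    · exact hmono ⟨hx0, h.le⟩ ⟨hm0.le, le_refl m⟩ h
    · exact hanti Set.self_mem_Ici (Set.mem_Ici.mpr h.le) h
  refine ⟨m, hm0, by unfold gg at hgm; linarith, ?_, ?_, ?_⟩
  · intro m' hm' heq
    exact huniq m' hm' (by unfold gg; linarith)
  · intro x hx
    by_cases h : x = m
    · rw [h]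
    · exact (hlt x hx h).le
  · intro x hx
    constructor
    · intro heq
      by_contra h
      exact absurd heq (ne_of_lt (hlt x hx h))
    · intro h; rw [h]
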